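/- Let K be an algebraically closed field and V a finite-dimensional K-vector space. For a symmetric matrix A ∈ S²(V) (symmetric bilinear form), the minimal number k of rank-one symmetric summands needed to write A as a sum of terms of the form c(u⊗v + v⊗u) equals ⌈rk(A)/2⌉. -/

import Mathlib

open Matrix Module

section Aux

variable {K : Type*} [Field K] {n : ℕ}

private lemma myVecMulVec_mulVec (u v y : Fin n → K) :
    (vecMulVec u v).mulVec y = (v ⬝ᵥ y) • u := by
  funext i
  simp only [mulVec, dotProduct, vecMulVec_apply, Pi.smul_apply, smul_eq_mul, Finset.sum_mul]
  exact Finset.sum_congr rfl fun j _ => by ring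

private lemma myIsSymm_vecMulVec (u : Fin n → K) : (vecMulVec u u).IsSymm :=
  Matrix.IsSymm.ext fun i j => by simp [vecMulVec_apply, mul_comm]

private lemma mySmul_vecMulVec (c : K) (u v : Fin n → K) :
    c • vecMulVec u v = vecMulVec (c • u) v := by
  ext i j
  simp [vecMulVec_apply, Matrix.smul_apply, mul_assoc]

private lemma myRank_vecMulVec_le (u v : Fin n → K) : (vecMulVec u v).rank ≤ 1 := by
  rw [vecMulVec_eq (Fin 1)]
  exact (rank_mul_le_left _ _).trans ((rank_le_card_width _).trans (by simp))

private lemma myRank_add_le (A B : Matrix (Fin n) (Fin n) K) :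
    (A + B).rank ≤ A.rank + B.rank := by
  have h : LinearMap.range (A + B).mulVecLin ≤
      LinearMap.range A.mulVecLin ⊔ LinearMap.range B.mulVecLin := by
    rw [mulVecLin_add]
    rintro z ⟨y, rfl⟩
    exact Submodule.add_mem_sup ⟨y, rfl⟩ ⟨y, rfl⟩
  exact (Submodule.finrank_mono h).trans
    (Submodule.finrank_add_le_finrank_add_finrank _ _)

private lemma myRank_sum_le {ι : Type*} (s : Finset ι) (f : ι → Matrix (Fin n) (Fin n) K) :
    (∑ i ∈ s, f i).rank ≤ ∑ i ∈ s, (f i).rank := by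
  classical
  induction s using Finset.induction with
  | empty => simp
  | insert _ _ h ih =>
    rw [Finset.sum_insert h, Finset.sum_insert h]
    exact (myRank_add_le _ _).trans (add_le_add_right ih _)

private lemma myTermRank (c : K) (u v : Fin n → K) :
    (c • (vecMulVec u v + vecMulVec v u)).rank ≤ 2 := by
  rw [smul_add, mySmul_vecMulVec, mySmul_vecMulVec]
  exact (myRank_add_le _ _).trans
    (add_le_add (myRank_vecMulVec_le _ _) (myRank_vecMulVec_le _ _))

private lemma myRank_eq_zero {A : Matrix (Fin n) (Fin n) K} (h : A.rank = 0) : A = 0 := by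
  ext i j
  have h1 : LinearMap.range A.mulVecLin = ⊥ := Submodule.finrank_eq_zero.mp h
  have h2 : A.mulVec (Pi.single j 1) = 0 := by
    have hm : A.mulVec (Pi.single j 1) ∈ LinearMap.range A.mulVecLin := ⟨_, rfl⟩
    rw [h1] at hm
    simpa using hm
  have := congrFun h2 i
  simpa using this

private lemma myExists_quad [CharZero K] {A : Matrix (Fin n) (Fin n) K} (hA : A.IsSymm)
    (h : A ≠ 0) : ∃ x : Fin n → K, x ⬝ᵥ A.mulVec x ≠ 0 := by
  by_contra hq
  push_neg at hq
  apply h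
  ext i j
  have h1 := hq (Pi.single i 1 + Pi.single j 1)
  have h2 := hq (Pi.single i 1)
  have h3 := hq (Pi.single j 1)
  have hs := hA.apply i j
  simp only [mulVec_add, dotProduct_add, add_dotProduct, mulVec_single, single_dotProduct,
    mul_one, one_mul, MulOpposite.op_one, one_smul, col_apply] at h1 h2 h3
  have h4 : (2 : K) * A i j = 0 := by linear_combination h1 - h2 - h3 - hs
  have := (mul_eq_zero.mp h4).resolve_left two_ne_zero
  simpa using this

private lemma myReduce {A : Matrix (Fin n) (Fin n) K} (hA : A.IsSymm)
    {x : Fin n → K} (hx : x ⬝ᵥ A.mulVec x ≠ 0) :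
    ∃ (c : K) (B : Matrix (Fin n) (Fin n) K), B.IsSymm ∧
      A = c • vecMulVec (A.mulVec x) (A.mulVec x) + B ∧ B.rank + 1 ≤ A.rank := by
  set w := A.mulVec x with hw
  set c : K := (x ⬝ᵥ w)⁻¹ with hc
  set B := A - c • vecMulVec w w with hB
  have hwx : x ⬝ᵥ w ≠ 0 := hx
  have hsymm : B.IsSymm := hA.sub ((myIsSymm_vecMulVec w).smul c)
  have hdec : A = c • vecMulVec w w + B := by rw [hB]; abel
  have hBmul : ∀ y, B.mulVec y = A.mulVec y - (c * (w ⬝ᵥ y)) • w := by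
    intro y
    rw [hB, sub_mulVec, smul_mulVec, myVecMulVec_mulVec, smul_smul]
  have hker : ∀ y, A.mulVec y = 0 → B.mulVec y = 0 := by
    intro y hy
    have key : w ⬝ᵥ y = x ⬝ᵥ A.mulVec y := by
      rw [hw, dotProduct_mulVec, ← mulVec_transpose, hA.eq]
    rw [hBmul, hy, key, hy, dotProduct_zero, mul_zero, zero_smul, sub_zero]
  have hxB : B.mulVec x = 0 := by
    rw [hBmul, dotProduct_comm w x, hc, inv_mul_cancel₀ hwx, one_smul, ← hw, sub_self]
  have hxA : A.mulVec x ≠ 0 := by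
    intro h0
    apply hwx
    rw [← hw] at *
    rw [h0, dotProduct_zero]
  have hlt : LinearMap.ker A.mulVecLin < LinearMap.ker B.mulVecLin := by
    rw [SetLike.lt_iff_le_and_exists]
    refine ⟨fun y hy => ?_, x, ?_, ?_⟩
    · rw [LinearMap.mem_ker, mulVecLin_apply] at *
      exact hker y hy
    · rw [LinearMap.mem_ker, mulVecLin_apply]
      exact hxB
    · rw [LinearMap.mem_ker, mulVecLin_apply]
      exact hxA
  have hfin : finrank K (LinearMap.ker A.mulVecLin) < finrank K (LinearMap.ker B.mulVecLin) :=
    Submodule.finrank_lt_finrank_of_lt hlt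
  have ha := LinearMap.finrank_range_add_finrank_ker A.mulVecLin
  have hb := LinearMap.finrank_range_add_finrank_ker B.mulVecLin
  have hra : A.rank = finrank K (LinearMap.range A.mulVecLin) := rfl
  have hrb : B.rank = finrank K (LinearMap.range B.mulVecLin) := rfl
  exact ⟨c, B, hsymm, hdec, by omega⟩

private lemma myPair [IsAlgClosed K] [CharZero K] (c₁ c₂ : K) (w₁ w₂ : Fin n → K) :
    ∃ (c : K) (p q : Fin n → K),
      c • (vecMulVec p q + vecMulVec q p)
        = c₁ • vecMulVec w₁ w₁ + c₂ • vecMulVec w₂ w₂ := by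
  obtain ⟨α, hα⟩ := IsAlgClosed.exists_pow_nat_eq c₁ (n := 2) two_pos
  obtain ⟨β, hβ⟩ := IsAlgClosed.exists_pow_nat_eq c₂ (n := 2) two_pos
  obtain ⟨I, hI⟩ := IsAlgClosed.exists_pow_nat_eq (-1 : K) (n := 2) two_pos
  refine ⟨(2 : K)⁻¹, α • w₁ + (I * β) • w₂, α • w₁ - (I * β) • w₂, ?_⟩
  rw [inv_smul_eq_iff₀ (two_ne_zero)]
  ext i j
  simp only [Matrix.smul_apply, Matrix.add_apply, vecMulVec_apply, Pi.add_apply, Pi.sub_apply,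
    Pi.smul_apply, smul_eq_mul]
  linear_combination (2 * w₁ i * w₁ j) * hα + (2 * w₂ i * w₂ j) * hβ
    - (2 * β ^ 2 * w₂ i * w₂ j) * hI

private lemma myPad {A : Matrix (Fin n) (Fin n) K} {j k : ℕ} (hjk : j ≤ k)
    (h : ∃ (c : Fin j → K) (u v : Fin j → (Fin n → K)),
        A = ∑ i, c i • (vecMulVec (u i) (v i) + vecMulVec (v i) (u i))) :
    ∃ (c : Fin k → K) (u v : Fin k → (Fin n → K)),
        A = ∑ i, c i • (vecMulVec (u i) (v i) + vecMulVec (v i) (u i)) := by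
  induction k, hjk using Nat.le_induction with
  | base => exact h
  | succ k hk ih =>
    obtain ⟨c, u, v, hd⟩ := ih
    refine ⟨Fin.cons 0 c, Fin.cons 0 u, Fin.cons 0 v, ?_⟩
    rw [Fin.sum_univ_succ]
    simp only [Fin.cons_zero, Fin.cons_succ, zero_smul, zero_add]
    exact hd

private lemma myDecomp [IsAlgClosed K] [CharZero K] :
    ∀ (r : ℕ) (A : Matrix (Fin n) (Fin n) K), A.IsSymm → A.rank ≤ r →
      ∃ k, 2 * k ≤ A.rank + 1 ∧ ∃ (c : Fin k → K) (u v : Fin k → (Fin n → K)),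
        A = ∑ i, c i • (vecMulVec (u i) (v i) + vecMulVec (v i) (u i)) := by
  intro r
  induction r with
  | zero =>
    intro A hA hr
    have hA0 : A = 0 := myRank_eq_zero (Nat.le_zero.mp hr)
    exact ⟨0, by omega, fun i => i.elim0, fun i => i.elim0, fun i => i.elim0, by simp [hA0]⟩
  | succ r ih =>
    intro A hA hr
    by_cases h0 : A = 0
    · exact ⟨0, by omega, fun i => i.elim0, fun i => i.elim0, fun i => i.elim0, by simp [h0]⟩
    obtain ⟨x, hx⟩ := myExists_quad hA h0
    obtain ⟨c₁, B, hBsymm, hABdec, hBrank⟩ := myReduce hA hx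
    by_cases hB0 : B = 0
    · refine ⟨1, by omega, fun _ => c₁ * (2 : K)⁻¹, fun _ => A.mulVec x, fun _ => A.mulVec x, ?_⟩
      rw [Fin.sum_univ_one]
      conv_lhs => rw [hABdec]
      rw [hB0, add_zero]
      ext i j
      simp only [Matrix.smul_apply, Matrix.add_apply, smul_eq_mul]
      field_simp
      ring
    obtain ⟨y, hy⟩ := myExists_quad hBsymm hB0
    obtain ⟨c₂, C, hCsymm, hBCdec, hCrank⟩ := myReduce hBsymm hy
    obtain ⟨k, hk, c, u, v, hCdec⟩ := ih C hCsymm (by omega)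
    obtain ⟨c₀, p, q, hpair⟩ := myPair c₁ c₂ (A.mulVec x) (B.mulVec y)
    refine ⟨k + 1, by omega, Fin.cons c₀ c, Fin.cons p u, Fin.cons q v, ?_⟩
    rw [Fin.sum_univ_succ]
    simp only [Fin.cons_zero, Fin.cons_succ]
    rw [← hCdec, hpair]
    rw [hBCdec] at hABdec
    conv_lhs => rw [hABdec]
    abel

end Aux

/-- The strength of a symmetric matrix `A` (minimal number of summands of the form
`c • (u ⊗ v + v ⊗ u)`) equals `⌈rank A / 2⌉`. -/
theorem stmt0 (K : Type*) [Field K] [IsAlgClosed K] [CharZero K]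
    (n : ℕ) (A : Matrix (Fin n) (Fin n) K) (hA : A.IsSymm) :
    IsLeast {k : ℕ | ∃ (c : Fin k → K) (u v : Fin k → (Fin n → K)),
        A = ∑ i, c i • (vecMulVec (u i) (v i) + vecMulVec (v i) (u i))}
      ((A.rank + 1) / 2) := by
  constructor
  · obtain ⟨k, hk, hd⟩ := myDecomp A.rank A hA le_rfl
    exact myPad (by omega) hd
  · rintro k ⟨c, u, v, hd⟩
    have hle : A.rank ≤ 2 * k := by
      calc A.rank = (∑ i, c i • (vecMulVec (u i) (v i) + vecMulVec (v i) (u i))).rank := by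
            rw [← hd]
        _ ≤ ∑ i : Fin k, (c i • (vecMulVec (u i) (v i) + vecMulVec (v i) (u i))).rank :=
            myRank_sum_le _ _
        _ ≤ ∑ _i : Fin k, 2 := Finset.sum_le_sum fun i _ => myTermRank _ _ _
        _ = 2 * k := by simp [mul_comm]
    omega
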